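/- Let n ≥ 1 and let F be a nonempty finite subset of {1,…,n}^3 that is a chain under the strict componentwise order, with elements listed in increasing order as v_1, …, v_r where v_ℓ = (i_ℓ, j_ℓ, k_ℓ). Then F is a facet (an inclusion-maximal such chain) if and only if the following three conditions hold: (P1) max(i_r, j_r, k_r) = n; (P2) min(i_1, j_1, k_1) = 1; (P3) if r ≥ 2 then for every ℓ with 1 ≤ ℓ ≤ r-1, min(i_{ℓ+1} - i_ℓ, j_{ℓ+1} - j_ℓ, k_{ℓ+1} - k_ℓ) = 1. -/

import Mathlib

/-- Vertices of `Δ(n)`: integer triples. -/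
abbrev V : Type := ℕ × ℕ × ℕ

/-- The strict componentwise order on triples. -/
def slt (u v : V) : Prop := u.1 < v.1 ∧ u.2.1 < v.2.1 ∧ u.2.2 < v.2.2

/-- A face of `Δ(n)`: a finite subset of `{1,…,n}³` that is a chain under `slt`. -/
def IsFace (n : ℕ) (F : Finset V) : Prop :=
  (∀ v ∈ F, v.1 ∈ Finset.Icc 1 n ∧ v.2.1 ∈ Finset.Icc 1 n ∧ v.2.2 ∈ Finset.Icc 1 n) ∧
  (∀ u ∈ F, ∀ v ∈ F, u ≠ v → slt u v ∨ slt v u)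

/-- A facet of `Δ(n)`: an inclusion-maximal face. -/
def IsFacet (n : ℕ) (F : Finset V) : Prop :=
  IsFace n F ∧ ∀ G : Finset V, IsFace n G → F ⊆ G → F = G

lemma slt_irrefl (x : V) : ¬ slt x x := fun h => lt_irrefl _ h.1

instance : IsTrans V slt :=
  ⟨fun _ _ _ h1 h2 => ⟨h1.1.trans h2.1, h1.2.1.trans h2.2.1, h1.2.2.trans h2.2.2⟩⟩

lemma insert_face {n : ℕ} {F : Finset V} (hF : IsFace n F) (x : V)
    (hb : x.1 ∈ Finset.Icc 1 n ∧ x.2.1 ∈ Finset.Icc 1 n ∧ x.2.2 ∈ Finset.Icc 1 n)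
    (hcmp : ∀ y ∈ F, slt y x ∨ slt x y) : IsFace n (insert x F) := by
  constructor
  · intro v hv
    rcases Finset.mem_insert.mp hv with rfl | hv
    · exact hb
    · exact hF.1 v hv
  · intro u hu v hv huv
    rcases Finset.mem_insert.mp hu with hux | huF
    · rcases Finset.mem_insert.mp hv with hvx | hvF
      · exact absurd (hux.trans hvx.symm) huv
      · subst hux; exact (hcmp v hvF).symm
    · rcases Finset.mem_insert.mp hv with hvx | hvF
      · subst hvx; exact hcmp u huF
      · exact hF.2 u huF v hvF huv

lemma facet_absorb {n : ℕ} {F : Finset V} (hfacet : IsFacet n F) (x : V)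
    (hb : x.1 ∈ Finset.Icc 1 n ∧ x.2.1 ∈ Finset.Icc 1 n ∧ x.2.2 ∈ Finset.Icc 1 n)
    (hcmp : ∀ y ∈ F, slt y x ∨ slt x y) : x ∈ F := by
  have hface := insert_face hfacet.1 x hb hcmp
  have h := hfacet.2 _ hface (Finset.subset_insert _ _)
  rw [h]
  exact Finset.mem_insert_self x F

/-- Characterization of the facets of `Δ(n)` (Lemma 4.1):  a nonempty face `F`, with
elements listed in increasing order by the list `L`, is a facet iff
(P1) the largest vertex has maximal coordinate `n`,
(P2) the smallest vertex has minimal coordinate `1`, and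
(P3) consecutive vertices differ by exactly `1` in some coordinate. -/
theorem facet_characterization (n : ℕ) (hn : 1 ≤ n) (F : Finset V) (hF : IsFace n F)
    (L : List V) (hsort : L.Chain' slt) (htf : L.toFinset = F) (hne : L ≠ []) :
    IsFacet n F ↔
      (max (L.getLast hne).1 (max (L.getLast hne).2.1 (L.getLast hne).2.2) = n) ∧
      (min (L.head hne).1 (min (L.head hne).2.1 (L.head hne).2.2) = 1) ∧
      (∀ ℓ : ℕ, ∀ h : ℓ + 1 < L.length,
        min ((L.get ⟨ℓ + 1, h⟩).1 - (L.get ⟨ℓ, Nat.lt_of_succ_lt h⟩).1)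
          (min ((L.get ⟨ℓ + 1, h⟩).2.1 - (L.get ⟨ℓ, Nat.lt_of_succ_lt h⟩).2.1)
            ((L.get ⟨ℓ + 1, h⟩).2.2 - (L.get ⟨ℓ, Nat.lt_of_succ_lt h⟩).2.2)) = 1) := by
  have hlen : 0 < L.length := List.length_pos_iff.2 hne
  have hpw : ∀ i j : Fin L.length, i < j → slt (L.get i) (L.get j) :=
    List.pairwise_iff_get.mp (List.isChain_iff_pairwise.mp hsort)
  have hmemF : ∀ i : Fin L.length, L.get i ∈ F := by
    intro i
    rw [← htf]
    exact List.mem_toFinset.mpr (List.get_mem L i)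
  have hmemL : ∀ x ∈ F, ∃ i : Fin L.length, L.get i = x := by
    intro x hx
    exact List.mem_iff_get.mp (List.mem_toFinset.mp (htf ▸ hx))
  have hlastget : L.getLast hne = L.get ⟨L.length - 1, by omega⟩ := by
    simp [List.getLast_eq_getElem, List.get_eq_getElem]
  have hheadget : L.head hne = L.get ⟨0, hlen⟩ := by
    simp [List.head_eq_getElem_zero, List.get_eq_getElem]
  constructor
  · intro hfacet
    refine ⟨?_, ?_, ?_⟩
    · -- P1
      set w := L.getLast hne with hw
      have hwF : w ∈ F := hlastget ▸ hmemF _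
      obtain ⟨hb1, hb2, hb3⟩ := hF.1 w hwF
      rw [Finset.mem_Icc] at hb1 hb2 hb3
      by_contra hmax
      have hlt : w.1 < n ∧ w.2.1 < n ∧ w.2.2 < n := by omega
      set x : V := (w.1 + 1, w.2.1 + 1, w.2.2 + 1) with hx
      have hx1 : x.1 = w.1 + 1 := rfl
      have hx2 : x.2.1 = w.2.1 + 1 := rfl
      have hx3 : x.2.2 = w.2.2 + 1 := rfl
      have hwx : slt w x := ⟨Nat.lt_succ_self _, Nat.lt_succ_self _, Nat.lt_succ_self _⟩
      have hall : ∀ y ∈ F, slt y x := by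
        intro y hy
        obtain ⟨i, rfl⟩ := hmemL y hy
        rcases eq_or_lt_of_le (Nat.le_sub_one_of_lt i.isLt) with h | h
        · have : i = ⟨L.length - 1, by omega⟩ := Fin.ext h
          rw [this, ← hlastget]
          exact hwx
        · exact Trans.trans (hpw i ⟨L.length - 1, by omega⟩ h) (hlastget ▸ hwx)
      have hxF : x ∈ F := by
        refine facet_absorb hfacet x ?_ (fun y hy => Or.inl (hall y hy))
        simp only [Finset.mem_Icc]
        omega
      exact slt_irrefl x (hall x hxF)
    · -- P2
      set w := L.head hne with hw
      have hwF : w ∈ F := hheadget ▸ hmemF _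
      obtain ⟨hb1, hb2, hb3⟩ := hF.1 w hwF
      rw [Finset.mem_Icc] at hb1 hb2 hb3
      by_contra hmin
      have hlt : 1 < w.1 ∧ 1 < w.2.1 ∧ 1 < w.2.2 := by omega
      set x : V := (w.1 - 1, w.2.1 - 1, w.2.2 - 1) with hx
      have hx1 : x.1 = w.1 - 1 := rfl
      have hx2 : x.2.1 = w.2.1 - 1 := rfl
      have hx3 : x.2.2 = w.2.2 - 1 := rfl
      have hwx : slt x w := ⟨by omega, by omega, by omega⟩
      have hall : ∀ y ∈ F, slt x y := by
        intro y hy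
        obtain ⟨i, rfl⟩ := hmemL y hy
        rcases Nat.eq_zero_or_pos i.1 with h | h
        · have : i = ⟨0, hlen⟩ := Fin.ext h
          rw [this, ← hheadget]
          exact hwx
        · exact Trans.trans (hheadget ▸ hwx) (hpw ⟨0, hlen⟩ i h)
      have hxF : x ∈ F := by
        refine facet_absorb hfacet x ?_ (fun y hy => Or.inr (hall y hy))
        simp only [Finset.mem_Icc]
        omega
      exact slt_irrefl x (hall x hxF)
    · -- P3
      intro ℓ h
      set v := L.get ⟨ℓ, Nat.lt_of_succ_lt h⟩ with hv
      set w := L.get ⟨ℓ + 1, h⟩ with hw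
      have hvw : slt v w := hpw _ _ (by simp [Fin.lt_def])
      obtain ⟨hb1, hb2, hb3⟩ := hF.1 w (hmemF _)
      rw [Finset.mem_Icc] at hb1 hb2 hb3
      by_contra hmin
      have hlt : v.1 + 2 ≤ w.1 ∧ v.2.1 + 2 ≤ w.2.1 ∧ v.2.2 + 2 ≤ w.2.2 := by
        obtain ⟨c1, c2, c3⟩ := hvw
        omega
      set x : V := (v.1 + 1, v.2.1 + 1, v.2.2 + 1) with hx
      have hx1 : x.1 = v.1 + 1 := rfl
      have hx2 : x.2.1 = v.2.1 + 1 := rfl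
      have hx3 : x.2.2 = v.2.2 + 1 := rfl
      have hvx : slt v x := ⟨Nat.lt_succ_self _, Nat.lt_succ_self _, Nat.lt_succ_self _⟩
      have hxw : slt x w := ⟨by omega, by omega, by omega⟩
      have hall : ∀ y ∈ F, slt y x ∨ slt x y := by
        intro y hy
        obtain ⟨i, rfl⟩ := hmemL y hy
        rcases le_or_gt i.1 ℓ with hc | hc
        · left
          rcases eq_or_lt_of_le hc with h' | h'
          · have : i = ⟨ℓ, Nat.lt_of_succ_lt h⟩ := Fin.ext h'
            rw [this, ← hv]
            exact hvx
          · exact Trans.trans (hpw i ⟨ℓ, Nat.lt_of_succ_lt h⟩ h') hvx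
        · right
          rcases eq_or_lt_of_le (Nat.succ_le_of_lt hc) with h' | h'
          · have : i = ⟨ℓ + 1, h⟩ := Fin.ext h'.symm
            rw [this, ← hw]
            exact hxw
          · exact Trans.trans hxw (hpw ⟨ℓ + 1, h⟩ i h')
      have hxF : x ∈ F := by
        refine facet_absorb hfacet x ?_ hall
        obtain ⟨hc1, hc2, hc3⟩ := hF.1 v (hmemF _)
        rw [Finset.mem_Icc] at hc1 hc2 hc3
        simp only [Finset.mem_Icc]
        omega
      rcases hall x hxF with h' | h' <;> exact slt_irrefl x h'
  · rintro ⟨h1, h2, h3⟩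
    refine ⟨hF, fun G hG hFG => ?_⟩
    by_contra hFG'
    obtain ⟨x, hxG, hxF⟩ := Finset.exists_of_ssubset (Finset.ssubset_iff_subset_ne.mpr ⟨hFG, hFG'⟩)
    obtain ⟨hg1, hg2, hg3⟩ := hG.1 x hxG
    rw [Finset.mem_Icc] at hg1 hg2 hg3
    have hcmp : ∀ i : Fin L.length, slt (L.get i) x ∨ slt x (L.get i) := by
      intro i
      refine hG.2 _ (hFG (hmemF i)) x hxG ?_
      intro h
      exact hxF (h ▸ hmemF i)
    rcases hcmp ⟨L.length - 1, by omega⟩ with hlast | hlast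
    · -- last slt x : contradicts P1
      rw [← hlastget] at hlast
      obtain ⟨c1, c2, c3⟩ := hlast
      omega
    · rcases hcmp ⟨0, hlen⟩ with hhead | hhead
      · -- boundary case: find ℓ with L[ℓ] slt x and x slt L[ℓ+1]
        classical
        have hex : ∃ m, ∀ hm : m < L.length, ¬ slt (L.get ⟨m, hm⟩) x := by
          refine ⟨L.length - 1, fun hm => ?_⟩
          intro hc
          exact slt_irrefl x (Trans.trans hlast hc)
        have hNspec := Nat.find_spec hex
        have hNle : Nat.find hex ≤ L.length - 1 := Nat.find_le (by
          intro hm hc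
          exact slt_irrefl x (Trans.trans hlast hc))
        set N := Nat.find hex with hN
        have hNlen : N < L.length := by omega
        have hNpos : 0 < N := by
          rcases Nat.eq_zero_or_pos N with h0 | h0
          · exfalso
            have h0' : Nat.find hex = 0 := hN ▸ h0
            have := Nat.find_spec hex
            rw [h0'] at this
            exact this hlen hhead
          · exact h0
        have hprev : slt (L.get ⟨N - 1, by omega⟩) x := by
          by_contra hc
          exact Nat.find_min hex (show N - 1 < N by omega) (fun hm => hc)
        have hnext : slt x (L.get ⟨N, hNlen⟩) := by
          rcases hcmp ⟨N, hNlen⟩ with h' | h'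
          · exact absurd h' (hNspec hNlen)
          · exact h'
        have hN1 : N - 1 + 1 = N := by omega
        have hh : N - 1 + 1 < L.length := by omega
        have h3' := h3 (N - 1) hh
        have heq1 : (⟨N - 1 + 1, hh⟩ : Fin L.length) = ⟨N, hNlen⟩ := Fin.ext hN1
        rw [heq1] at h3'
        obtain ⟨c1, c2, c3⟩ := hprev
        obtain ⟨d1, d2, d3⟩ := hnext
        omega
      · -- x slt head : contradicts P2
        rw [← hheadget] at hhead
        obtain ⟨c1, c2, c3⟩ := hhead
        omega
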